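/- For any integer m ≥ 0 and complex z with |z| < 1, (1-z)^m · log(1-z) = Σ_{n=1}^∞ c_n z^n, where for n > m the coefficient is c_n = -(1/n)(-1)^m Γ(1+m)Γ(n-m)/Γ(n) = -(1/n)(-1)^m m!(n-m-1)!/(n-1)!. -/

import Mathlib

theorem log_binomial_expansion (m : ℕ) :
    ∃ c : ℕ → ℂ,
      (∀ z : ℂ, ‖z‖ < 1 →
        HasSum (fun n : ℕ => c n * z ^ n) ((1 - z) ^ m * Complex.log (1 - z))) ∧
      ∀ n : ℕ, n > m →
        c n = -(1 / n) * (-1) ^ m *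
          ((m.factorial : ℂ) * ((n - m - 1).factorial : ℂ) / ((n - 1).factorial : ℂ)) := by
  induction m with
  | zero =>
    refine ⟨fun n => -(1 / n), fun z hz => ?_, fun n hn => ?_⟩
    · have h := (Complex.hasSum_taylorSeries_neg_log hz).neg
      simp only [neg_neg, pow_zero, one_mul]
      convert h using 1
      · rfl
      · funext n; ring
      · rw [neg_neg]
    · have h : ((n - 1).factorial : ℂ) ≠ 0 := by
        exact_mod_cast Nat.factorial_ne_zero _
      simp [Nat.factorial, div_self h]
  | succ m ih =>
    obtain ⟨c, hsum, hc⟩ := ih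
    set cprev : ℕ → ℂ := fun n => match n with | 0 => 0 | k + 1 => c k with hcprev
    refine ⟨fun n => c n - cprev n, fun z hz => ?_, fun n hn => ?_⟩
    · have h1 := hsum z hz
      have h2 : HasSum (fun n : ℕ => cprev (n + 1) * z ^ (n + 1))
          (z * ((1 - z) ^ m * Complex.log (1 - z))) := by
        have := h1.mul_left z
        convert this using 1
        · rfl
        funext n
        simp only [hcprev]
        ring
      have h3 : HasSum (fun n : ℕ => cprev n * z ^ n)
          (z * ((1 - z) ^ m * Complex.log (1 - z))) := by
        have := (hasSum_nat_add_iff (f := fun n : ℕ => cprev n * z ^ n) 1).mp h2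
        simpa [hcprev] using this
      have h4 := h1.sub h3
      convert h4 using 1
      · rfl
      · funext n; ring
      · ring
    · have hn' : n > m := Nat.lt_of_succ_lt hn
      obtain ⟨j, rfl⟩ : ∃ j, n = m + 2 + j := ⟨n - (m + 2), by omega⟩
      have e1 : m + 2 + j - m - 1 = j + 1 := by omega
      have e2 : m + 2 + j - 1 = m + 1 + j := by omega
      have e3 : m + 2 + j - (m + 1) - 1 = j := by omega
      have hprev : cprev (m + 2 + j) = c (m + 1 + j) := by
        simp only [hcprev, show m + 2 + j = (m + 1 + j) + 1 by omega]
      have f1 := hc (m + 2 + j) (by omega)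
      have f2 := hc (m + 1 + j) (by omega)
      show c (m + 2 + j) - cprev (m + 2 + j) = _
      rw [hprev, f1, f2]
      rw [e1, e2, e3, show m + 1 + j - m - 1 = j from by omega,
        show m + 1 + j - 1 = m + j from by omega]
      have hfm : ((m.factorial : ℂ)) ≠ 0 := by exact_mod_cast Nat.factorial_ne_zero _
      have hfj : ((j.factorial : ℂ)) ≠ 0 := by exact_mod_cast Nat.factorial_ne_zero _
      have hfmj : (((m + j).factorial : ℂ)) ≠ 0 := by exact_mod_cast Nat.factorial_ne_zero _
      have hN : ((m : ℂ) + 2 + j) ≠ 0 := by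
        intro h
        have : ((m + 2 + j : ℕ) : ℂ) = 0 := by push_cast; linear_combination h
        exact_mod_cast (by positivity : (0:ℕ) < m + 2 + j).ne' (by exact_mod_cast this)
      have hN1 : ((m : ℂ) + 1 + j) ≠ 0 := by
        intro h
        have : ((m + 1 + j : ℕ) : ℂ) = 0 := by push_cast; linear_combination h
        exact_mod_cast (by positivity : (0:ℕ) < m + 1 + j).ne' (by exact_mod_cast this)
      rw [show (j + 1).factorial = (j + 1) * j.factorial from Nat.factorial_succ j,
        show (m + 1 + j).factorial = (m + 1 + j) * (m + j).factorial from by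
          rw [show m + 1 + j = (m + j) + 1 from by omega, Nat.factorial_succ],
        show (m + 1).factorial = (m + 1) * m.factorial from Nat.factorial_succ m]
      push_cast
      field_simp
      ring
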